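/- Let B be a C*-algebra and let t : Z → W be a surjective B-linear isometry between right Hilbert C*-modules over B. Then t is unitary: it is adjointable with adjoint t⁻¹, and ⟨t(z₁) | t(z₂)⟩ = ⟨z₁ | z₂⟩ for all z₁, z₂ ∈ Z. -/

import Mathlib

open scoped RightActions

/-- The December 2024 Mathlib `CStarModule` (right `Aᵐᵒᵖ`-action, inner product `A`-linear on
the right in the second argument); Mathlib's `CStarModule` now uses a left action instead. -/
class RightCStarModule (A E : Type*) [NonUnitalSemiring A] [StarRing A] [Module ℂ A]
    [AddCommGroup E] [Module ℂ E] [PartialOrder A] [SMul Aᵐᵒᵖ E] [Norm A] [Norm E]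
    extends Inner A E where
  inner_add_right {x} {y} {z} : inner x (y + z) = inner x y + inner x z
  inner_self_nonneg {x} : 0 ≤ inner x x
  inner_self {x} : inner x x = 0 ↔ x = 0
  inner_op_smul_right {a : A} {x y : E} : inner x (y <• a) = inner x y * a
  inner_smul_right_complex {z : ℂ} {x} {y} : inner x (z • y) = z • inner x y
  star_inner x y : star (inner x y) = inner y x
  norm_eq_sqrt_norm_inner_self x : ‖x‖ = √‖inner x x‖

namespace RightCStarModule

variable {A E : Type*} [NonUnitalCStarAlgebra A] [PartialOrder A] [StarOrderedRing A]
  [AddCommGroup E] [Module ℂ E] [SMul Aᵐᵒᵖ E] [Norm E] [RightCStarModule A E]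

lemma inner_op_smul_left {a : A} {x y : E} : inner A (x <• a) y = star a * inner A x y := by
  rw [← star_inner, inner_op_smul_right, star_mul, star_inner]

lemma inner_add_left {x y z : E} : inner A (x + y) z = inner A x z + inner A y z := by
  rw [← star_inner, inner_add_right, star_add, star_inner, star_inner]

lemma inner_smul_left_complex {c : ℂ} {x y : E} :
    inner A (c • x) y = star c • inner A x y := by
  rw [← star_inner, inner_smul_right_complex, star_smul, star_inner]

lemma norm_sq_eq {x : E} : ‖x‖ ^ 2 = ‖inner A x x‖ := by
  rw [norm_eq_sqrt_norm_inner_self (A := A) x, Real.sq_sqrt (norm_nonneg _)]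

lemma norm_zero {A : Type*} [NonUnitalCStarAlgebra A] [PartialOrder A] [StarOrderedRing A]
    [SMul Aᵐᵒᵖ E] [Norm E] [RightCStarModule A E] : ‖(0 : E)‖ = 0 := by
  rw [norm_eq_sqrt_norm_inner_self (A := A) (0 : E), (inner_self (A := A)).mpr rfl]
  simp

lemma norm_zero_iff {A : Type*} [NonUnitalCStarAlgebra A] [PartialOrder A] [StarOrderedRing A]
    [SMul Aᵐᵒᵖ E] [Norm E] [RightCStarModule A E] (x : E) : ‖x‖ = 0 ↔ x = 0 := by
  constructor
  · intro h
    have h2 : ‖inner A x x‖ = 0 := by rw [← norm_sq_eq (A := A), h]; simp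
    exact (inner_self (A := A)).mp (norm_eq_zero.mp h2)
  · rintro rfl
    exact norm_zero (A := A)

end RightCStarModule


section Aux

/-- norm of cube of a selfadjoint element. -/
lemma lance_norm_cube {A : Type*} [NormedRing A] [StarRing A] [CStarRing A]
    {q : A} (hq : IsSelfAdjoint q) : ‖q * q * q‖ = ‖q‖ ^ 3 := by
  have h2 : ‖q * q‖ = ‖q‖ * ‖q‖ := by
    nth_rewrite 1 [← hq.star_eq]
    exact CStarRing.norm_star_mul_self
  have hq2 : IsSelfAdjoint (q * q) := by
    rw [IsSelfAdjoint, star_mul, hq.star_eq]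
  have h4 : ‖(q * q) * (q * q)‖ = ‖q‖ ^ 4 := by
    nth_rewrite 1 [← hq2.star_eq]
    rw [CStarRing.norm_star_mul_self, h2]; ring
  rcases eq_or_lt_of_le (norm_nonneg q) with h0 | h0
  · have hq0 : q = 0 := norm_eq_zero.mp h0.symm
    simp [hq0]
  · refine le_antisymm ?_ ?_
    · calc ‖q * q * q‖ ≤ ‖q * q‖ * ‖q‖ := norm_mul_le _ _
        _ = ‖q‖ ^ 3 := by rw [h2]; ring
    · have hle : ‖q‖ ^ 4 ≤ ‖q * q * q‖ * ‖q‖ := by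
        calc ‖q‖ ^ 4 = ‖(q * q) * (q * q)‖ := h4.symm
          _ = ‖(q * q * q) * q‖ := by rw [mul_assoc (q*q) q q, ← mul_assoc]
          _ ≤ ‖q * q * q‖ * ‖q‖ := norm_mul_le _ _
      have := le_of_mul_le_mul_right (by calc ‖q‖^3 * ‖q‖ = ‖q‖ ^ 4 := by ring
        _ ≤ ‖q * q * q‖ * ‖q‖ := hle) h0
      exact this

end Aux

section Key

variable {B : Type*} [NonUnitalCStarAlgebra B] [PartialOrder B] [StarOrderedRing B]

set_option synthInstance.maxHeartbeats 1000000 in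
lemma lance_le {a b : B} (ha : 0 ≤ a) (hb : 0 ≤ b)
    (h : ∀ c : B, ‖star c * a * c‖ = ‖star c * b * c‖) : a ≤ b := by
  rw [← Unitization.inr_le_iff a b (IsSelfAdjoint.of_nonneg ha) (IsSelfAdjoint.of_nonneg hb)]
  have hα : (0 : Unitization ℂ B) ≤ (a : Unitization ℂ B) := Unitization.inr_nonneg_iff.mpr ha
  have hβ : (0 : Unitization ℂ B) ≤ (b : Unitization ℂ B) := Unitization.inr_nonneg_iff.mpr hb
  have hU : ∀ y : Unitization ℂ B, y.fst = 0 →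
      ‖star y * (a : Unitization ℂ B) * y‖ = ‖star y * (b : Unitization ℂ B) * y‖ := by
    intro y hy
    have hy' : y = ((y.snd : B) : Unitization ℂ B) := by
      conv_lhs => rw [← Unitization.inl_fst_add_inr_snd_eq y]
      rw [hy]
      simp
    rw [hy', ← Unitization.inr_star, ← Unitization.inr_mul, ← Unitization.inr_mul,
      ← Unitization.inr_mul, ← Unitization.inr_mul, Unitization.norm_inr, Unitization.norm_inr]
    exact h y.snd
  have main : ∀ ε : ℝ, 0 < ε →
      (a : Unitization ℂ B) ≤ (b : Unitization ℂ B) + algebraMap ℝ (Unitization ℂ B) ε := by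
    intro ε hε
    set A := Unitization ℂ B with hA
    set βε : A := (b : A) + algebraMap ℝ A ε with hβε_def
    have hεnn : (0:A) ≤ algebraMap ℝ A ε := by
      have h1 : algebraMap ℝ A ε
          = star (algebraMap ℝ A (Real.sqrt ε)) * algebraMap ℝ A (Real.sqrt ε) := by
        rw [((IsSelfAdjoint.all (Real.sqrt ε)).algebraMap A).star_eq, ← map_mul,
          Real.mul_self_sqrt hε.le]
      rw [h1]; exact star_mul_self_nonneg _
    have hβε0 : (0:A) ≤ βε := add_nonneg hβ hεnn
    have hβεu : IsUnit βε := by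
      refine CStarAlgebra.isUnit_of_le (algebraMap ℝ A ε) ?_ (IsStrictlyPositive.iff_of_unital.mpr ⟨hεnn, ?_⟩)
      · rw [hβε_def]
        exact le_add_of_nonneg_left hβ
      · exact (isUnit_iff_ne_zero.mpr hε.ne').map (algebraMap ℝ A)
    set c : A := βε ^ (-(1/2) : ℝ) with hc_def
    have hc0 : (0:A) ≤ c := CFC.rpow_nonneg
    have hcsa : IsSelfAdjoint c := .of_nonneg hc0
    have hccon : c * βε * c = 1 := CFC.conjugate_rpow_neg_one_half βε (IsStrictlyPositive.iff_of_unital.mpr ⟨hβε0, hβεu⟩)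
    set q : A := c * (a : A) * c with hq_def
    have hq0 : (0:A) ≤ q := by
      have := conjugate_nonneg_of_nonneg hα hc0
      rwa [hq_def]
    have hqsa : IsSelfAdjoint q := .of_nonneg hq0
    set p : A := c * (b : A) * c with hp_def
    have hp0 : (0:A) ≤ p := by
      have := conjugate_nonneg_of_nonneg hβ hc0
      rwa [hp_def]
    have hp1 : p ≤ 1 := by
      have h1 : star c * (b:A) * c ≤ star c * βε * c :=
        star_left_conjugate_le_conjugate (le_add_of_nonneg_right hεnn) c
      rw [hcsa.star_eq] at h1
      rw [hp_def]
      exact h1.trans_eq hccon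
    have hpn : ‖p‖ ≤ 1 := (CStarAlgebra.norm_le_one_iff_of_nonneg p hp0).mpr hp1
    have hqfst : q.fst = 0 := by
      rw [hq_def, Unitization.fst_mul, Unitization.fst_mul, Unitization.fst_inr,
        mul_zero, zero_mul]
    have hyfst : (c * q).fst = 0 := by rw [Unitization.fst_mul, hqfst, mul_zero]
    have hkey := hU (c * q) hyfst
    have hstar : star (c * q) = q * c := by rw [star_mul, hcsa.star_eq, hqsa.star_eq]
    have e1 : star (c * q) * (a:A) * (c * q) = q * q * q := by
      rw [hstar]
      calc q * c * (a:A) * (c * q) = q * (c * (a:A) * c) * q := by noncomm_ring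
        _ = q * q * q := by rw [← hq_def]
    have e2 : star (c * q) * (b:A) * (c * q) = q * p * q := by
      rw [hstar]
      calc q * c * (b:A) * (c * q) = q * (c * (b:A) * c) * q := by noncomm_ring
        _ = q * p * q := by rw [← hp_def]
    rw [e1, e2] at hkey
    have hq3 : ‖q‖ ^ 3 = ‖q * p * q‖ := by rw [← hkey, lance_norm_cube hqsa]
    have hqn : ‖q‖ ≤ 1 := by
      have hle : ‖q‖ ^ 3 ≤ ‖q‖ ^ 2 := by
        calc ‖q‖ ^ 3 = ‖q * p * q‖ := hq3
          _ ≤ ‖q * p‖ * ‖q‖ := norm_mul_le _ _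
          _ ≤ ‖q‖ * ‖p‖ * ‖q‖ := by gcongr; exact norm_mul_le _ _
          _ ≤ ‖q‖ * 1 * ‖q‖ := by gcongr
          _ = ‖q‖ ^ 2 := by ring
      by_contra h'
      push_neg at h'
      have h1 : (0:ℝ) < ‖q‖ ^ 2 := by positivity
      nlinarith [mul_pos h1 (sub_pos.mpr h')]
    have hsq : ‖CFC.sqrt (a:A) * c‖ ≤ 1 := by
      have h2 : ‖CFC.sqrt (a:A) * c‖ * ‖CFC.sqrt (a:A) * c‖ = ‖q‖ := by
        rw [← CStarRing.norm_star_mul_self]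
        congr 1
        rw [star_mul, hcsa.star_eq, (IsSelfAdjoint.of_nonneg (CFC.sqrt_nonneg _)).star_eq]
        calc c * CFC.sqrt (a:A) * (CFC.sqrt (a:A) * c)
            = c * (CFC.sqrt (a:A) * CFC.sqrt (a:A)) * c := by noncomm_ring
          _ = q := by rw [CFC.sqrt_mul_sqrt_self _ hα, hq_def]
      nlinarith [norm_nonneg (CFC.sqrt (a:A) * c)]
    rw [hβε_def] at hβεu hβε0 ⊢
    rw [le_iff_norm_sqrt_mul_rpow _ _ hα (IsStrictlyPositive.iff_of_unital.mpr ⟨hβε0, hβεu⟩)]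
    rw [hβε_def] at hc_def
    rw [← hc_def]
    exact hsq
  have hpre : Filter.Tendsto (fun ε : ℝ => algebraMap ℝ (Unitization ℂ B) ε)
      (nhds 0) (nhds 0) := by
    have heq : (fun ε : ℝ => algebraMap ℝ (Unitization ℂ B) ε)
        = (fun z : ℂ => algebraMap ℂ (Unitization ℂ B) z) ∘ (fun ε : ℝ => (ε : ℂ)) := by
      funext ε
      simp [IsScalarTower.algebraMap_apply ℝ ℂ (Unitization ℂ B)]
    rw [heq]
    have h1 := ((continuous_algebraMap ℂ (Unitization ℂ B)).tendsto 0).comp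
      (Complex.continuous_ofReal.tendsto 0)
    simpa using h1
  have htt : Filter.Tendsto
      (fun ε : ℝ => (b : Unitization ℂ B) + algebraMap ℝ (Unitization ℂ B) ε)
      (nhdsWithin 0 (Set.Ioi (0:ℝ))) (nhds (b : Unitization ℂ B)) := by
    have h2 := (tendsto_const_nhds (x := (b : Unitization ℂ B))
      (f := nhdsWithin (0:ℝ) (Set.Ioi (0:ℝ)))).add (hpre.mono_left nhdsWithin_le_nhds)
    rwa [add_zero] at h2
  exact ge_of_tendsto htt (Filter.eventually_of_mem self_mem_nhdsWithin fun ε hε => main ε hε)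

lemma lance_eq {a b : B} (ha : 0 ≤ a) (hb : 0 ≤ b)
    (h : ∀ c : B, ‖star c * a * c‖ = ‖star c * b * c‖) : a = b :=
  le_antisymm (lance_le ha hb h) (lance_le hb ha fun c => (h c).symm)

end Key

/-- Lance's theorem: a surjective `B`-linear isometry `t : Z → W` between Hilbert
C*-modules over a C*-algebra `B` is unitary: it preserves the `B`-valued inner products
and is adjointable, with adjoint its inverse `s` (so `⟨t z | w⟩ = ⟨z | s w⟩`). -/
theorem stmt_15 {B Z W : Type*}
    [NonUnitalCStarAlgebra B] [PartialOrder B] [StarOrderedRing B]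
    [AddCommGroup Z] [Module ℂ Z] [SMul Bᵐᵒᵖ Z] [Norm Z] [RightCStarModule B Z]
    [AddCommGroup W] [Module ℂ W] [SMul Bᵐᵒᵖ W] [Norm W] [RightCStarModule B W]
    (t : Z →ₗ[ℂ] W)
    (hmod : ∀ (b : B) (z : Z), t (z <• b) = t z <• b)
    (hiso : ∀ z : Z, ‖t z‖ = ‖z‖)
    (hsurj : Function.Surjective t) :
    (∀ z₁ z₂ : Z, (inner B (t z₁) (t z₂) : B) = inner B z₁ z₂) ∧
    ∃ s : W →ₗ[ℂ] Z,
      (∀ w : W, t (s w) = w) ∧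
      (∀ z : Z, s (t z) = z) ∧
      (∀ (b : B) (w : W), s (w <• b) = s w <• b) ∧
      ∀ (z : Z) (w : W), (inner B (t z) w : B) = inner B z (s w) := by

  -- diagonal preservation of inner B products
  have hdiag : ∀ z : Z, (inner B (t z) (t z) : B) = inner B z z := by
    intro z
    refine lance_eq RightCStarModule.inner_self_nonneg RightCStarModule.inner_self_nonneg ?_
    intro c
    have h1W : star c * (inner B (t z) (t z) : B) * c = inner B (t z <• c) (t z <• c) := by
      rw [RightCStarModule.inner_op_smul_left, RightCStarModule.inner_op_smul_right, mul_assoc]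
    have h1Z : star c * (inner B z z : B) * c = inner B (z <• c) (z <• c) := by
      rw [RightCStarModule.inner_op_smul_left, RightCStarModule.inner_op_smul_right, mul_assoc]
    rw [h1W, h1Z, ← RightCStarModule.norm_sq_eq, ← RightCStarModule.norm_sq_eq, ← hmod c z, hiso]
  -- polarization, symmetric part
  have hsym : ∀ x y : Z, (inner B (t x) (t y) : B) + inner B (t y) (t x)
      = inner B x y + inner B y x := by
    intro x y
    have h := hdiag (x + y)
    simp only [map_add, RightCStarModule.inner_add_left, RightCStarModule.inner_add_right,
      hdiag x, hdiag y] at h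
    have h' := congrArg (fun u : B => u - inner B x x - inner B y y) h
    abel_nf at h' ⊢
    exact h'
  -- polarization, antisymmetric part
  have hfull : ∀ z₁ z₂ : Z, (inner B (t z₁) (t z₂) : B) = inner B z₁ z₂ := by
    intro x y
    have e2 : (inner B (t x) (t y) : B) - inner B (t y) (t x) = inner B x y - inner B y x := by
      have h := hsym x (Complex.I • y)
      simp only [map_smul, RightCStarModule.inner_smul_left_complex,
        RightCStarModule.inner_smul_right_complex, Complex.star_def, Complex.conj_I,
        neg_smul] at h
      rw [← sub_eq_add_neg, ← sub_eq_add_neg, ← smul_sub, ← smul_sub] at h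
      have h' := congrArg (fun u : B => (Complex.I)⁻¹ • u) h
      simp only [smul_smul, inv_mul_cancel₀ Complex.I_ne_zero, one_smul] at h'
      exact h'
    have h2 : (2:ℂ) • (inner B (t x) (t y) : B) = (2:ℂ) • (inner B x y : B) := by
      rw [two_smul, two_smul]
      calc (inner B (t x) (t y) : B) + inner B (t x) (t y)
          = ((inner B (t x) (t y) : B) + inner B (t y) (t x))
            + ((inner B (t x) (t y) : B) - inner B (t y) (t x)) := by abel
        _ = ((inner B x y : B) + inner B y x) + ((inner B x y : B) - inner B y x) := by
            rw [hsym x y, e2]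
        _ = (inner B x y : B) + inner B x y := by abel
    have h3 := congrArg (fun u : B => ((2:ℂ)⁻¹) • u) h2
    simpa [smul_smul] using h3
  -- t is injective
  have hinj : Function.Injective t := by
    intro z₁ z₂ hz
    have h0 : t (z₁ - z₂) = 0 := by rw [map_sub, hz, sub_self]
    have h1 : ‖z₁ - z₂‖ = 0 := by
      rw [← hiso (z₁ - z₂), h0]
      exact RightCStarModule.norm_zero (A := B)
    exact sub_eq_zero.mp ((RightCStarModule.norm_zero_iff (A := B) (z₁ - z₂)).mp h1)
  let e : Z ≃ₗ[ℂ] W := LinearEquiv.ofBijective t ⟨hinj, hsurj⟩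
  have hts : ∀ w : W, t (e.symm w) = w := fun w => e.apply_symm_apply w
  refine ⟨hfull, e.symm.toLinearMap, hts, fun z => e.symm_apply_apply z, ?_, ?_⟩
  · intro b w
    apply hinj
    simp only [LinearEquiv.coe_coe]
    rw [hmod b (e.symm w), hts, hts]
  · intro z w
    conv_lhs => rw [← hts w]
    exact hfull z (e.symm w)
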